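/- Let A be the adjacency matrix of an undirected graph with d = A·1 and 1ᵀd > 0, and let x = exp(A)·1 be the total subgraph communicability vector. Then (dᵀx)/(1ᵀd) ≥ (1ᵀx)/n, with equality if and only if the graph is regular. -/

import Mathlib

open scoped Matrix

lemma cheb_identity {n : ℕ} (w f g : Fin n → ℝ) :
    ∑ i, ∑ j, w i * w j * ((f i - f j) * (g i - g j))
      = 2 * ((∑ i, w i) * (∑ i, f i * g i * w i) - (∑ i, f i * w i) * (∑ i, g i * w i)) := by
  have h : ∀ i j : Fin n, w i * w j * ((f i - f j) * (g i - g j))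
      = (w i * (f j * g j * w j) + (f i * g i * w i) * w j)
        - ((f i * w i) * (g j * w j) + (g i * w i) * (f j * w j)) := by
    intros; ring
  simp_rw [h, Finset.sum_sub_distrib, Finset.sum_add_distrib, ← Finset.mul_sum,
    ← Finset.sum_mul]
  ring

lemma dot_conj {n : ℕ} (U : Matrix (Fin n) (Fin n) ℝ) (hU : Uᵀ * U = 1) (a b : Fin n → ℝ) :
    (U *ᵥ a) ⬝ᵥ (U *ᵥ b) = a ⬝ᵥ b := by
  rw [Matrix.dotProduct_mulVec, ← Matrix.vecMul_transpose, Matrix.vecMul_vecMul, hU,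
    Matrix.vecMul_one]

lemma exp_monotone_prod_nonneg (a b : ℝ) : 0 ≤ (a - b) * (Real.exp a - Real.exp b) := by
  rcases le_total a b with h | h
  · have := Real.exp_le_exp.2 h; nlinarith
  · have := Real.exp_le_exp.2 h; nlinarith

lemma exp_monotone_prod_pos {a b : ℝ} (h : a ≠ b) :
    0 < (a - b) * (Real.exp a - Real.exp b) := by
  rcases lt_or_gt_of_ne h with h | h
  · exact mul_pos_of_neg_of_neg (by linarith) (by simpa using Real.exp_lt_exp.2 h)
  · exact mul_pos (by linarith) (by simpa [sub_pos] using Real.exp_lt_exp.2 h)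

theorem global_friendship_paradox_communicability
    (n : ℕ) (hn : 0 < n) (A : Matrix (Fin n) (Fin n) ℝ)
    (hsym : A.IsSymm)
    (h01 : ∀ i j, A i j = 0 ∨ A i j = 1)
    (hdiag : ∀ i, A i i = 0)
    (d : Fin n → ℝ) (hd : d = A.mulVec (fun _ => 1))
    (hdpos : 0 < ∑ i, d i)
    (x : Fin n → ℝ) (hx : x = (NormedSpace.exp A).mulVec (fun _ => 1)) :
    (∑ i, d i * x i) / (∑ i, d i) ≥ (∑ i, x i) / (n : ℝ) ∧
    ((∑ i, d i * x i) / (∑ i, d i) = (∑ i, x i) / (n : ℝ) ↔ ∀ i j, d i = d j) := by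
  classical
  have hA : A.IsHermitian := by
    rw [Matrix.IsHermitian, Matrix.conjTranspose_eq_transpose_of_trivial]; exact hsym
  set lam : Fin n → ℝ := hA.eigenvalues with hlam
  set U : Matrix (Fin n) (Fin n) ℝ := (hA.eigenvectorUnitary : Matrix (Fin n) (Fin n) ℝ) with hUdef
  have hstar : star U = Uᵀ := by
    rw [Matrix.star_eq_conjTranspose, Matrix.conjTranspose_eq_transpose_of_trivial]
  have hU1 : Uᵀ * U = 1 := by
    rw [← hstar]; exact Unitary.coe_star_mul_self hA.eigenvectorUnitary
  have hU2 : U * Uᵀ = 1 := by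
    rw [← hstar]; exact Unitary.coe_mul_star_self hA.eigenvectorUnitary
  have hspec : A = U * Matrix.diagonal lam * Uᵀ := by
    have := hA.spectral_theorem
    rw [Unitary.conjStarAlgAut_apply, hstar] at this
    simpa [RCLike.ofReal_real_eq_id] using this
  have hexp : NormedSpace.exp A = U * Matrix.diagonal (fun i => Real.exp (lam i)) * Uᵀ := by
    have hUnit : IsUnit U := ⟨⟨U, Uᵀ, hU2, hU1⟩, rfl⟩
    have hinv : U⁻¹ = Uᵀ := Matrix.inv_eq_right_inv hU2
    rw [hspec, ← hinv, Matrix.exp_conj U _ hUnit, hinv, Matrix.exp_diagonal]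
    congr 1
    congr 1
    rw [Pi.exp_def, ← Real.exp_eq_exp_ℝ]
  set c : Fin n → ℝ := Uᵀ *ᵥ (fun _ => 1) with hc
  set w : Fin n → ℝ := fun i => c i ^ 2 with hw
  -- (U * diagonal f * Uᵀ) *ᵥ 1 = U *ᵥ (f * c)
  have hvec : ∀ f : Fin n → ℝ,
      (U * Matrix.diagonal f * Uᵀ) *ᵥ (fun _ => 1) = U *ᵥ (fun i => f i * c i) := by
    intro f
    rw [← Matrix.mulVec_mulVec, ← Matrix.mulVec_mulVec, ← hc,
      show Matrix.diagonal f *ᵥ c = fun i => f i * c i from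
        funext fun i => Matrix.mulVec_diagonal f c i]
  have hUc : U *ᵥ c = (fun _ => 1) := by
    rw [hc, Matrix.mulVec_mulVec, hU2, Matrix.one_mulVec]
  have hone : (fun _ => (1 : ℝ)) = U *ᵥ (fun i => (fun _ : Fin n => (1:ℝ)) i * c i) := by
    simp only [one_mul]
    exact hUc.symm
  have hsum : ∀ f g : Fin n → ℝ,
      (U *ᵥ (fun i => f i * c i)) ⬝ᵥ (U *ᵥ (fun i => g i * c i)) = ∑ i, f i * g i * w i := by
    intro f g
    rw [dot_conj U hU1]
    simp only [dotProduct, hw]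
    exact Finset.sum_congr rfl fun i _ => by ring
  have hdvec : d = U *ᵥ (fun i => lam i * c i) := by rw [hd, hspec]; exact hvec lam
  have hxvec : x = U *ᵥ (fun i => Real.exp (lam i) * c i) := by
    rw [hx, hexp]; exact hvec _
  -- the four scalar quantities
  have hN : (n : ℝ) = ∑ i, w i := by
    have h0 : (fun _ : Fin n => (1:ℝ)) ⬝ᵥ (fun _ : Fin n => (1:ℝ)) = (n : ℝ) := by
      simp [dotProduct]
    rw [← h0]
    nth_rewrite 1 [hone]; nth_rewrite 2 [hone]
    rw [hsum]
    exact Finset.sum_congr rfl fun i _ => by ring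
  have hD : ∑ i, d i = ∑ i, lam i * w i := by
    have : (fun _ : Fin n => (1:ℝ)) ⬝ᵥ d = ∑ i, d i := by simp [dotProduct]
    rw [← this]
    nth_rewrite 1 [hone]
    rw [hdvec, hsum]
    exact Finset.sum_congr rfl fun i _ => by ring
  have hX : ∑ i, x i = ∑ i, Real.exp (lam i) * w i := by
    have : (fun _ : Fin n => (1:ℝ)) ⬝ᵥ x = ∑ i, x i := by simp [dotProduct]
    rw [← this]
    nth_rewrite 1 [hone]
    rw [hxvec, hsum]
    exact Finset.sum_congr rfl fun i _ => by ring
  have hP : ∑ i, d i * x i = ∑ i, lam i * Real.exp (lam i) * w i := by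
    have : d ⬝ᵥ x = ∑ i, d i * x i := rfl
    rw [← this, hdvec, hxvec, hsum]
  -- Chebyshev
  set S : ℝ := ∑ i, ∑ j, w i * w j * ((lam i - lam j) * (Real.exp (lam i) - Real.exp (lam j)))
    with hSdef
  have hwnn : ∀ i, 0 ≤ w i := fun i => sq_nonneg _
  have hterm_nn : ∀ i j : Fin n,
      0 ≤ w i * w j * ((lam i - lam j) * (Real.exp (lam i) - Real.exp (lam j))) := fun i j =>
    mul_nonneg (mul_nonneg (hwnn i) (hwnn j)) (exp_monotone_prod_nonneg _ _)
  have hSnn : 0 ≤ S :=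
    Finset.sum_nonneg fun i _ => Finset.sum_nonneg fun j _ => hterm_nn i j
  have hSid : S = 2 * ((n : ℝ) * (∑ i, d i * x i) - (∑ i, d i) * (∑ i, x i)) := by
    rw [hSdef, cheb_identity w lam (fun i => Real.exp (lam i)), hN, hD, hX, hP]
  have hnpos : (0 : ℝ) < n := by exact_mod_cast hn
  constructor
  · rw [ge_iff_le, div_le_div_iff₀ hnpos hdpos]
    nlinarith [hSnn, hSid]
  · rw [div_eq_div_iff hdpos.ne' hnpos.ne']
    constructor
    · intro heq
      have hS0 : S = 0 := by nlinarith [hSid]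
      have hterms : ∀ i j : Fin n,
          w i * w j * ((lam i - lam j) * (Real.exp (lam i) - Real.exp (lam j))) = 0 := by
        intro i j
        have h1 : ∀ i ∈ Finset.univ, (0:ℝ) ≤
            ∑ j, w i * w j * ((lam i - lam j) * (Real.exp (lam i) - Real.exp (lam j))) :=
          fun i _ => Finset.sum_nonneg fun j _ => hterm_nn i j
        have h2 := (Finset.sum_eq_zero_iff_of_nonneg h1).1 hS0 i (Finset.mem_univ i)
        exact (Finset.sum_eq_zero_iff_of_nonneg fun j _ => hterm_nn i j).1 h2 j
          (Finset.mem_univ j)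
      have hlamc : ∀ i j : Fin n, c i ≠ 0 → c j ≠ 0 → lam i = lam j := by
        intro i j hi hj
        by_contra hne
        have hpos : 0 < w i * w j *
            ((lam i - lam j) * (Real.exp (lam i) - Real.exp (lam j))) :=
          mul_pos (mul_pos (by positivity) (by positivity)) (exp_monotone_prod_pos hne)
        exact absurd (hterms i j) (ne_of_gt hpos)
      obtain ⟨i0, hi0⟩ : ∃ i0, c i0 ≠ 0 := by
        by_contra hall
        push_neg at hall
        have : (n : ℝ) = 0 := by
          rw [hN]; apply Finset.sum_eq_zero; intro i _; simp [hw, hall i]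
        exact absurd this (by positivity)
      have hdconst : d = fun _ => lam i0 := by
        rw [hdvec]
        have : (fun i => lam i * c i) = fun i => lam i0 * c i := by
          funext i
          by_cases hci : c i = 0
          · simp [hci]
          · rw [hlamc i i0 hci hi0]
        rw [this]
        have : (fun i => lam i0 * c i) = lam i0 • c := rfl
        rw [this, Matrix.mulVec_smul, hUc]
        funext i; simp
      intro i j; rw [hdconst]
    · intro hreg
      have i0 : Fin n := ⟨0, hn⟩
      have hdconst : d = fun _ => d i0 := funext fun i => hreg i i0
      have hlc : ∀ i, lam i * c i = d i0 * c i := by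
        have h1 : Uᵀ *ᵥ d = fun i => lam i * c i := by
          rw [hdvec, Matrix.mulVec_mulVec, hU1, Matrix.one_mulVec]
        have h2 : Uᵀ *ᵥ d = d i0 • c := by
          rw [hdconst]
          have he : (fun _ : Fin n => d i0) = d i0 • (fun _ : Fin n => (1:ℝ)) := by
            funext i; simp
          rw [he, Matrix.mulVec_smul, ← hc]
          simp
        intro i
        have := congrFun (h1.symm.trans h2) i
        simpa using this
      have hS0 : S = 0 := by
        rw [hSdef]
        apply Finset.sum_eq_zero; intro i _
        apply Finset.sum_eq_zero; intro j _
        by_cases hci : c i = 0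
        · simp [hw, hci]
        by_cases hcj : c j = 0
        · simp [hw, hcj]
        have hli : lam i = d i0 := mul_right_cancel₀ hci (hlc i)
        have hlj : lam j = d i0 := mul_right_cancel₀ hcj (hlc j)
        rw [hli, hlj]; ring
      nlinarith [hSid, hS0]
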